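/- Let (E, j) be a soft inductive system of normed spaces and let a = (a_n) be a j-convergent net, meaning lim_m limsup_n ‖a_n − j_{nm} a_m‖ = 0. Then the limit lim_n ‖a_n‖ exists (the net of norms converges in ℝ). -/

import Mathlib

open Filter Topology

section SoftSystems

variable {ι : Type*} [Preorder ι] {E : ι → Type*} [∀ n, NormedAddCommGroup (E n)]
  [∀ n, NormedSpace ℂ (E n)]

/-- A *soft inductive system* of normed spaces: the connecting maps `j n m : E m → E n`
(for `m ≤ n`) are linear contractions and are asymptotically transitive:
`lim_m limsup_n ‖(j n l − j n m ∘ j m l) a‖ = 0` for every `l` and `a : E l`. -/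
def IsSoftSystem (j : ∀ n m, E m →L[ℂ] E n) : Prop :=
  (∀ n m, m ≤ n → ‖j n m‖ ≤ 1) ∧
  ∀ (l : ι) (a : E l),
    Tendsto (fun m => limsup (fun n => ‖j n l a - j n m (j m l a)‖) atTop) atTop (𝓝 0)

/-- A net is *j-convergent* if `lim_m limsup_n ‖a n − j n m (a m)‖ = 0`. -/
def JConv (j : ∀ n m, E m →L[ℂ] E n) (a : ∀ n, E n) : Prop :=
  Tendsto (fun m => limsup (fun n => ‖a n - j n m (a m)‖) atTop) atTop (𝓝 0)

/-- A net is *null* if its norms tend to zero along the directed index set. -/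
def IsNullNet (a : ∀ n, E n) : Prop :=
  Tendsto (fun n => ‖a n‖) atTop (𝓝 0)

end SoftSystems

/-- In a soft inductive system of normed spaces, the net of norms of a
j-convergent (uniformly bounded) net converges in `ℝ`. -/
theorem stmt2 {ι : Type*} [Preorder ι] [Nonempty ι] [IsDirected ι (· ≤ ·)]
    {E : ι → Type*} [∀ n, NormedAddCommGroup (E n)] [∀ n, NormedSpace ℂ (E n)]
    (j : ∀ n m, E m →L[ℂ] E n) (hj : IsSoftSystem j)
    (a : lp E ⊤) (ha : JConv j (fun n => a n)) :
    ∃ L : ℝ, Tendsto (fun n => ‖a n‖) atTop (𝓝 L) := by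
  have ha' : Tendsto (fun m => limsup (fun n => ‖(a : ∀ n, E n) n - j n m (a m)‖) atTop) atTop (𝓝 0) := ha
  set f : ι → ℝ := fun n => ‖a n‖ with hf
  set g : ι → ι → ℝ := fun m n => ‖(a : ∀ n, E n) n - j n m (a m)‖ with hg
  have hfC : ∀ n, f n ≤ ‖a‖ := fun n => lp.norm_apply_le_norm ENNReal.top_ne_zero a n
  have hf0 : ∀ n, 0 ≤ f n := fun n => norm_nonneg _
  have hbd : IsBoundedUnder (· ≤ ·) atTop f := isBoundedUnder_of ⟨‖a‖, hfC⟩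
  have hbd' : IsBoundedUnder (· ≥ ·) atTop f := isBoundedUnder_of ⟨0, hf0⟩
  have hcob : IsCoboundedUnder (· ≥ ·) atTop f := hbd.isCoboundedUnder_ge
  set L := limsup f atTop with hL
  set l := liminf f atTop with hl
  have key : ∀ m, L ≤ limsup (g m) atTop + f m := by
    intro m
    have hgbd : IsBoundedUnder (· ≤ ·) atTop (g m) := by
      refine ⟨‖a‖ + f m, ?_⟩
      rw [eventually_map]
      filter_upwards [eventually_ge_atTop m] with n hn
      calc g m n ≤ f n + ‖j n m (a m)‖ := norm_sub_le _ _
        _ ≤ ‖a‖ + f m := by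
            refine add_le_add (hfC n) (((j n m).le_opNorm _).trans ?_)
            calc ‖j n m‖ * ‖a m‖ ≤ 1 * ‖a m‖ :=
              mul_le_mul_of_nonneg_right (hj.1 n m hn) (norm_nonneg _)
            _ = f m := one_mul _
    have hgbd' : IsBoundedUnder (· ≥ ·) atTop (g m) :=
      isBoundedUnder_of ⟨0, fun n => norm_nonneg _⟩
    have step1 : L ≤ limsup (fun n => g m n + f m) atTop := by
      refine limsup_le_limsup ?_ hbd'.isCoboundedUnder_le ?_
      · filter_upwards [eventually_ge_atTop m] with n hn
        calc f n = ‖((a : ∀ n, E n) n - j n m (a m)) + j n m (a m)‖ := by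
              rw [sub_add_cancel]
          _ ≤ g m n + ‖j n m (a m)‖ := norm_add_le _ _
          _ ≤ g m n + f m := by
              refine add_le_add_right (((j n m).le_opNorm _).trans ?_) _
              calc ‖j n m‖ * ‖a m‖ ≤ 1 * ‖a m‖ :=
                mul_le_mul_of_nonneg_right (hj.1 n m hn) (norm_nonneg _)
              _ = f m := one_mul _
      · obtain ⟨C, hC⟩ := hgbd
        rw [eventually_map] at hC
        refine ⟨C + f m, ?_⟩
        rw [eventually_map]
        filter_upwards [hC] with n hn using add_le_add_left hn _
    refine step1.trans ?_
    have : limsup (g m + fun _ => f m) atTop ≤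
        limsup (g m) atTop + limsup (fun _ : ι => f m) atTop :=
      limsup_add_le hgbd' hgbd
        (isBoundedUnder_of ⟨f m, fun _ => le_rfl⟩ :
          IsBoundedUnder (· ≥ ·) atTop fun _ : ι => f m).isCoboundedUnder_le
        (isBoundedUnder_of ⟨f m, fun _ => le_rfl⟩)
    simp only [limsup_const] at this
    exact this
  have hLl : L ≤ l := by
    refine le_of_forall_pos_le_add fun ε hε => ?_
    have hev : ∀ᶠ m in atTop, limsup (g m) atTop < ε := ha'.eventually (gt_mem_nhds hε)
    have : ∀ᶠ m in atTop, L - ε ≤ f m := by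
      filter_upwards [hev] with m hm
      have := key m
      linarith
    have := le_liminf_of_le hcob this
    linarith
  have hlL : l ≤ L := liminf_le_limsup hbd hbd'
  exact ⟨L, tendsto_of_liminf_eq_limsup (le_antisymm hlL hLl) rfl hbd hbd'⟩
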